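/- Let (F, ‖·‖) be an n-dimensional real Banach space and ε > 0. Then there exist N ≤ (3+ε)^n and functionals x₁*, …, x_N* in the unit sphere of F* such that the norm |x| = max_{i≤N} x_i*(x) satisfies |x| ≤ ‖x‖ ≤ ((2+ε)/ε)·|x| for all x ∈ F. -/

import Mathlib

open Metric MeasureTheory Module
open scoped ENNReal

private lemma sep_card_bound (E : Type*) [NormedAddCommGroup E] [NormedSpace ℝ E]
    [FiniteDimensional ℝ E] [Nontrivial E] {δ : ℝ} (hδ : 0 < δ)
    (t : Finset E) (hts : (↑t : Set E) ⊆ sphere (0:E) 1)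
    (hsep : ∀ a ∈ t, ∀ b ∈ t, a ≠ b → δ ≤ ‖a - b‖) :
    (t.card : ℝ) ≤ ((2 + δ) / δ) ^ (finrank ℝ E) := by
  borelize E
  set μ : Measure E := (Module.finBasis ℝ E).addHaar with hμ
  have hd2 : (0:ℝ) < δ/2 := by linarith
  have hdisj : (↑t : Set E).PairwiseDisjoint (fun z => ball z (δ/2)) := by
    intro a ha b hb hab
    exact ball_disjoint_ball (by
      have := hsep a ha b hb hab
      rw [dist_eq_norm]; linarith)
  have hsum : μ (⋃ z ∈ t, ball z (δ/2)) = ∑ z ∈ t, μ (ball z (δ/2)) :=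
    measure_biUnion_finset hdisj (fun z _ => measurableSet_ball)
  have hball : ∀ z : E, μ (ball z (δ/2)) = ENNReal.ofReal ((δ/2) ^ finrank ℝ E) * μ (ball 0 1) :=
    fun z => Measure.addHaar_ball μ z hd2.le
  have hsub : (⋃ z ∈ t, ball z (δ/2)) ⊆ ball (0:E) (1 + δ/2) := by
    intro x hx
    simp only [Set.mem_iUnion] at hx
    obtain ⟨z, hz, hxz⟩ := hx
    have hz1 : ‖z‖ = 1 := by simpa using hts hz
    have : dist x (0:E) ≤ dist x z + dist z 0 := dist_triangle _ _ _
    rw [mem_ball] at hxz ⊢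
    simp only [dist_zero_right] at this ⊢
    rw [hz1] at this ; linarith
  have h1 : (t.card : ℝ≥0∞) * (ENNReal.ofReal ((δ/2) ^ finrank ℝ E) * μ (ball 0 1))
      ≤ ENNReal.ofReal ((1 + δ/2) ^ finrank ℝ E) * μ (ball 0 1) := by
    calc (t.card : ℝ≥0∞) * (ENNReal.ofReal ((δ/2) ^ finrank ℝ E) * μ (ball 0 1))
        = ∑ z ∈ t, μ (ball z (δ/2)) := by
          rw [Finset.sum_congr rfl (fun z _ => hball z), Finset.sum_const, nsmul_eq_mul]
      _ = μ (⋃ z ∈ t, ball z (δ/2)) := hsum.symm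
      _ ≤ μ (ball (0:E) (1 + δ/2)) := measure_mono hsub
      _ = ENNReal.ofReal ((1 + δ/2) ^ finrank ℝ E) * μ (ball 0 1) :=
          Measure.addHaar_ball μ 0 (by linarith)
  have hμpos : μ (ball (0:E) 1) ≠ 0 := (measure_ball_pos μ 0 one_pos).ne'
  have hμtop : μ (ball (0:E) 1) ≠ ⊤ := measure_ball_lt_top.ne
  rw [← mul_assoc, ENNReal.mul_le_mul_iff_left hμpos hμtop] at h1
  have h2 : (t.card : ℝ≥0∞) * ENNReal.ofReal ((δ/2) ^ finrank ℝ E)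
      = ENNReal.ofReal (t.card * (δ/2) ^ finrank ℝ E) := by
    rw [ENNReal.ofReal_mul (by positivity)]
    simp
  rw [h2, ENNReal.ofReal_le_ofReal_iff (by positivity)] at h1
  have hpow : (0:ℝ) < (δ/2) ^ finrank ℝ E := by positivity
  rw [← le_div_iff₀ hpow] at h1
  refine h1.trans_eq ?_
  rw [← div_pow]
  congr 1
  field_simp

private lemma net_exists (E : Type*) [NormedAddCommGroup E] [NormedSpace ℝ E]
    [FiniteDimensional ℝ E] [Nontrivial E] {δ : ℝ} (hδ : 0 < δ) :
    ∃ t : Finset E, (↑t : Set E) ⊆ sphere (0:E) 1 ∧ t.Nonempty ∧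
      (t.card : ℝ) ≤ ((2 + δ) / δ) ^ (finrank ℝ E) ∧
      ∀ y ∈ sphere (0:E) 1, ∃ z ∈ t, ‖y - z‖ < δ := by
  classical
  set S : Set ℕ := {m | ∃ t : Finset E, (↑t : Set E) ⊆ sphere (0:E) 1 ∧
      (∀ a ∈ t, ∀ b ∈ t, a ≠ b → δ ≤ ‖a - b‖) ∧ t.card = m} with hS
  obtain ⟨y₀, hy₀⟩ : (sphere (0:E) 1).Nonempty := NormedSpace.sphere_nonempty.mpr zero_le_one
  have h1S : 1 ∈ S := ⟨{y₀}, by simpa using hy₀, by simp, by simp⟩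
  have hSbdd : BddAbove S := by
    refine ⟨⌈((2 + δ) / δ) ^ (finrank ℝ E)⌉₊, fun m hm => ?_⟩
    obtain ⟨t, h1, h2, h3⟩ := hm
    have hb := sep_card_bound E hδ t h1 h2
    rw [h3] at hb
    exact_mod_cast hb.trans (Nat.le_ceil _)
  have hM : sSup S ∈ S := Nat.sSup_mem ⟨1, h1S⟩ hSbdd
  obtain ⟨t, ht1, ht2, ht3⟩ := hM
  refine ⟨t, ht1, ?_, ?_, ?_⟩
  · rw [← Finset.card_pos, ht3]
    exact lt_of_lt_of_le one_pos (le_csSup hSbdd h1S)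
  · have := sep_card_bound E hδ t ht1 ht2
    exact this
  · intro y hy
    by_contra hcon
    push_neg at hcon
    have hyt : y ∉ t := fun h => absurd (hcon y h) (by simp [hδ])
    have hins : (t.card + 1) ∈ S := by
      refine ⟨insert y t, ?_, ?_, by rw [Finset.card_insert_of_notMem hyt]⟩
      · intro z hz
        rcases Finset.mem_insert.mp (by exact_mod_cast hz) with rfl | h
        · exact hy
        · exact ht1 h
      · intro a ha b hb hab
        rcases Finset.mem_insert.mp ha with rfl | ha' <;>
          rcases Finset.mem_insert.mp hb with rfl | hb'
        · exact absurd rfl hab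
        · exact hcon b hb'
        · rw [norm_sub_rev]; exact hcon a ha'
        · exact ht2 a ha' b hb' hab
    have := le_csSup hSbdd hins
    rw [ht3] at this
    omega

theorem stmt_0 (F : Type*) [NormedAddCommGroup F] [NormedSpace ℝ F]
    [FiniteDimensional ℝ F] (n : ℕ) (hn : Module.finrank ℝ F = n)
    (ε : ℝ) (hε : 0 < ε) :
    ∃ (N : ℕ) (f : Fin N → (F →L[ℝ] ℝ)),
      (N : ℝ) ≤ (3 + ε) ^ n ∧
      (∀ i, ‖f i‖ = 1) ∧
      ∀ x : F, (⨆ i, f i x) ≤ ‖x‖ ∧ ‖x‖ ≤ ((2 + ε) / ε) * ⨆ i, f i x := by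
  rcases Nat.eq_zero_or_pos n with rfl | hn1
  · -- trivial case
    have : Subsingleton F := by
      rw [← Module.finrank_zero_iff (R := ℝ)]; exact hn
    refine ⟨0, Fin.elim0, by norm_num, fun i => i.elim0, fun x => ?_⟩
    have hx : x = 0 := Subsingleton.elim x 0
    subst hx
    simp [Real.iSup_of_isEmpty]
  · have hfr : finrank ℝ (F →L[ℝ] ℝ) = n := by
      rw [← LinearEquiv.finrank_eq (LinearMap.toContinuousLinearMap (𝕜 := ℝ) (E := F) (F' := ℝ))]
      rw [Module.finrank_linearMap, hn, finrank_self, mul_one]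
    have : Nontrivial (F →L[ℝ] ℝ) :=
      Module.nontrivial_of_finrank_pos (R := ℝ) (hfr ▸ hn1)
    set δ : ℝ := 2 / (2 + ε) with hδdef
    have hδ : 0 < δ := by positivity
    obtain ⟨t, ht1, ht2, ht3, ht4⟩ := net_exists (F →L[ℝ] ℝ) hδ
    refine ⟨t.card, fun i => (t.equivFin.symm i : F →L[ℝ] ℝ), ?_, ?_, ?_⟩
    · rw [hfr] at ht3
      refine ht3.trans_eq ?_
      congr 1
      rw [hδdef]
      field_simp
      ring
    · intro i
      have := ht1 (t.equivFin.symm i).2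
      simpa using this
    · intro x
      haveI : Nonempty (Fin t.card) := by
        rw [← Finset.card_pos] at ht2; exact Fin.pos_iff_nonempty.mp ht2
      have hbdd : BddAbove (Set.range fun i : Fin t.card => (t.equivFin.symm i : F →L[ℝ] ℝ) x) :=
        (Set.finite_range _).bddAbove
      have hnorm1 : ∀ i : Fin t.card, ‖(t.equivFin.symm i : F →L[ℝ] ℝ)‖ = 1 := fun i => by
        simpa using ht1 (t.equivFin.symm i).2
      constructor
      · apply ciSup_le
        intro i
        calc (t.equivFin.symm i : F →L[ℝ] ℝ) x ≤ ‖(t.equivFin.symm i : F →L[ℝ] ℝ) x‖ := le_abs_self _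
          _ ≤ ‖(t.equivFin.symm i : F →L[ℝ] ℝ)‖ * ‖x‖ := (t.equivFin.symm i : F →L[ℝ] ℝ).le_opNorm x
          _ = ‖x‖ := by rw [hnorm1 i, one_mul]
      · rcases eq_or_ne x 0 with rfl | hx
        · have h0 : ∀ i : Fin t.card, (t.equivFin.symm i : F →L[ℝ] ℝ) (0:F) = 0 := fun i => by simp
          simp only [h0, norm_zero, ciSup_const, mul_zero, le_refl]
        · obtain ⟨g, hg1, hg2⟩ := exists_dual_vector ℝ x (norm_ne_zero_iff.mpr hx)
          have hgs : g ∈ sphere (0:F →L[ℝ] ℝ) 1 := by simpa using hg1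
          obtain ⟨z, hzt, hz⟩ := ht4 g hgs
          obtain ⟨i, hi⟩ : ∃ i : Fin t.card, (t.equivFin.symm i : F →L[ℝ] ℝ) = z :=
            ⟨t.equivFin ⟨z, hzt⟩, by simp⟩
          have hzx : (1 - δ) * ‖x‖ ≤ z x := by
            have h1 : g x - z x ≤ ‖(g - z) x‖ := by
              rw [ContinuousLinearMap.sub_apply]; exact le_abs_self _
            have h2 : ‖(g - z) x‖ ≤ ‖g - z‖ * ‖x‖ := (g - z).le_opNorm x
            have h3 : ‖g - z‖ * ‖x‖ ≤ δ * ‖x‖ :=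
              mul_le_mul_of_nonneg_right hz.le (norm_nonneg x)
            have h4 : g x = ‖x‖ := by exact_mod_cast hg2
            nlinarith [norm_nonneg x]
          have hsup : (1 - δ) * ‖x‖ ≤ ⨆ i, (t.equivFin.symm i : F →L[ℝ] ℝ) x := by
            refine hzx.trans ?_
            rw [← hi] at *
            exact le_ciSup hbdd i
          have h1δ : 1 - δ = ε / (2 + ε) := by rw [hδdef]; field_simp; ring
          rw [h1δ] at hsup
          have hpos : (0:ℝ) < ε / (2 + ε) := by positivity
          calc ‖x‖ = ((2+ε)/ε) * ((ε/(2+ε)) * ‖x‖) := by field_simp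
            _ ≤ _ := mul_le_mul_of_nonneg_left hsup (by positivity)
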